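/- arXiv:math/0606662 — 2 statements merged into one kernel-verified Lean document; each statement's English description precedes it below -/
import Mathlib

section
/- Let R be an irreducible root system with coweight lattice P, and let r : P → ℝ_{>0} be the homomorphism r(λ) = Π_{α∈R⁺} τ_α^{⟨λ,α⟩/2} where each τ_α > 0 and τ_α depends only on the W₀-orbit of α, with τ_α τ_{2α}² > 1 for all α ∈ R₂ (where τ_{2α} := 1 if 2α ∉ R). If λ, μ ∈ P with λ − μ ∈ Q⁺ (the ℕ-span of the positive coroots), then r(μ) ≤ r(λ), with equality if and only if μ = λ. -/
open RealInnerProductSpace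
open scoped Classical

open RealInnerProductSpace
open scoped Classical

variable {E : Type*}

/-- The coroot `α^∨ = 2α/⟨α,α⟩` of a root `α`. -/
noncomputable def coroot [NormedAddCommGroup E] [InnerProductSpace ℝ E] (α : E) : E :=
  (2 / ⟪α, α⟫) • α

/-- `g` is the orthogonal reflection in the hyperplane orthogonal to `α`. -/
def IsReflectionOf [NormedAddCommGroup E] [InnerProductSpace ℝ E]
    (g : E ≃ₗᵢ[ℝ] E) (α : E) : Prop :=
  ∀ x, g x = x - (2 * ⟪x, α⟫ / ⟪α, α⟫) • α

/-- The Weyl group `W₀`: the group generated by the reflections in the roots. -/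
def weylGroup [NormedAddCommGroup E] [InnerProductSpace ℝ E] (R : Finset E) :
    Subgroup (E ≃ₗᵢ[ℝ] E) :=
  Subgroup.closure {g | ∃ α ∈ R, IsReflectionOf g α}

/-- `R` is a (possibly non-reduced) root system spanning `E`. -/
structure IsRootSystem [NormedAddCommGroup E] [InnerProductSpace ℝ E] (R : Finset E) : Prop where
  nonzero : ∀ α ∈ R, α ≠ 0
  neg_mem : ∀ α ∈ R, -α ∈ R
  reflect_mem : ∀ α ∈ R, ∀ β ∈ R, β - (2 * ⟪β, α⟫ / ⟪α, α⟫) • α ∈ R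
  cartan_int : ∀ α ∈ R, ∀ β ∈ R, ∃ k : ℤ, (k : ℝ) = 2 * ⟪β, α⟫ / ⟪α, α⟫
  span_top : Submodule.span ℝ (R : Set E) = ⊤

/-- Irreducibility: `R` admits no partition into two orthogonal nonempty subsets. -/
def IsIrreducibleRS [NormedAddCommGroup E] [InnerProductSpace ℝ E] (R : Finset E) : Prop :=
  ∀ S₁ S₂ : Set E, (R : Set E) = S₁ ∪ S₂ →
    (∀ a ∈ S₁, ∀ b ∈ S₂, ⟪a, b⟫ = 0) → S₁ = ∅ ∨ S₂ = ∅

/-- `B` is a base of `R` with corresponding positive system `Rpos = R⁺`. -/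
structure IsBaseOf [NormedAddCommGroup E] [InnerProductSpace ℝ E]
    (R Rpos B : Finset E) : Prop where
  base_subset : B ⊆ Rpos
  pos_subset : Rpos ⊆ R
  pos_or_neg : ∀ α ∈ R, α ∈ Rpos ∨ -α ∈ Rpos
  not_both : ∀ α ∈ Rpos, -α ∉ Rpos
  indep : LinearIndependent ℝ (fun b : B => (b : E))
  pos_combo : ∀ β ∈ Rpos, ∃ c : E → ℝ, (∀ b, 0 ≤ c b) ∧ β = ∑ b ∈ B, c b • b

/-- `R₂ = {α ∈ R : α/2 ∉ R}`. -/
noncomputable def Rtwo [NormedAddCommGroup E] [InnerProductSpace ℝ E] (R : Finset E) :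
    Finset E :=
  R.filter fun α => (2 : ℝ)⁻¹ • α ∉ R

/-- The homomorphism `r(λ) = ∏_{α ∈ R⁺} τ_α^{⟨λ,α⟩/2}`. -/
noncomputable def rhom [NormedAddCommGroup E] [InnerProductSpace ℝ E]
    (Rpos : Finset E) (τ : E → ℝ) (lam : E) : ℝ :=
  ∏ α ∈ Rpos, τ α ^ (⟪lam, α⟫ / 2)

/-- Membership in the coweight lattice `P`: integral pairing with every simple root. -/
def inCoweightLattice [NormedAddCommGroup E] [InnerProductSpace ℝ E]
    (B : Finset E) (x : E) : Prop :=
  ∀ b ∈ B, ∃ k : ℤ, ⟪x, b⟫ = (k : ℝ)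

section AuxLemmas

/-- products of reals that are `≥ 1`. -/
lemma prod_ge_one_aux {ι : Type*} (s : Finset ι) (f : ι → ℝ) (h : ∀ i ∈ s, 1 ≤ f i) :
    1 ≤ ∏ i ∈ s, f i ∧ ((∏ i ∈ s, f i) = 1 ↔ ∀ i ∈ s, f i = 1) := by
  classical
  induction s using Finset.induction with
  | empty => simp
  | @insert a s ha ih =>
    obtain ⟨ih1, ih2⟩ := ih fun i hi => h i (Finset.mem_insert_of_mem hi)
    have ha1 : 1 ≤ f a := h a (Finset.mem_insert_self a s)
    rw [Finset.prod_insert ha]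
    refine ⟨by nlinarith, ?_, ?_⟩
    · intro he i hi
      have h1 : f a ≤ 1 := by nlinarith
      have h2 : ∏ i ∈ s, f i ≤ 1 := by nlinarith
      rcases Finset.mem_insert.1 hi with rfl | hi
      · linarith
      · exact (ih2.1 (le_antisymm h2 ih1)) i hi
    · intro hall
      rw [hall a (Finset.mem_insert_self a s), one_mul,
        ih2.2 fun i hi => hall i (Finset.mem_insert_of_mem hi)]

variable [NormedAddCommGroup E] [InnerProductSpace ℝ E]

lemma rhom_add (Rpos : Finset E) (τ : E → ℝ) (hτ : ∀ α ∈ Rpos, 0 < τ α) (x y : E) :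
    rhom Rpos τ (x + y) = rhom Rpos τ x * rhom Rpos τ y := by
  unfold rhom
  rw [← Finset.prod_mul_distrib]
  refine Finset.prod_congr rfl fun α hα => ?_
  rw [inner_add_left, add_div, Real.rpow_add (hτ α hα)]

lemma rhom_zero (Rpos : Finset E) (τ : E → ℝ) : rhom Rpos τ 0 = 1 := by
  unfold rhom
  refine Finset.prod_eq_one fun α _ => ?_
  rw [inner_zero_left, zero_div, Real.rpow_zero]

lemma rhom_pos (Rpos : Finset E) (τ : E → ℝ) (hτ : ∀ α ∈ Rpos, 0 < τ α) (x : E) :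
    0 < rhom Rpos τ x :=
  Finset.prod_pos fun α hα => Real.rpow_pos_of_pos (hτ α hα) _

lemma rhom_nsmul (Rpos : Finset E) (τ : E → ℝ) (hτ : ∀ α ∈ Rpos, 0 < τ α) (n : ℕ) (x : E) :
    rhom Rpos τ ((n : ℝ) • x) = rhom Rpos τ x ^ n := by
  induction n with
  | zero => simpa using rhom_zero Rpos τ
  | succ n ih =>
    push_cast
    rw [add_smul, one_smul, rhom_add _ _ hτ, ih, pow_succ]

lemma rhom_sum {ι : Type*} (Rpos : Finset E) (τ : E → ℝ) (hτ : ∀ α ∈ Rpos, 0 < τ α)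
    (s : Finset ι) (c : ι → ℕ) (v : ι → E) :
    rhom Rpos τ (∑ i ∈ s, (c i : ℝ) • v i) = ∏ i ∈ s, rhom Rpos τ (v i) ^ c i := by
  classical
  induction s using Finset.induction with
  | empty => simpa using rhom_zero Rpos τ
  | @insert a s ha ih =>
    rw [Finset.sum_insert ha, Finset.prod_insert ha, rhom_add _ _ hτ, rhom_nsmul _ _ hτ, ih]

/-- coefficients of a vanishing combination of the base vanish -/
lemma base_coeffs_zero {R Rpos B : Finset E} (hbase : IsBaseOf R Rpos B)
    (f : E → ℝ) (hf : ∑ b ∈ B, f b • b = 0) : ∀ b ∈ B, f b = 0 := by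
  have h := Fintype.linearIndependent_iff.1 hbase.indep (fun i => f i)
  have hs : ∑ i : B, f (i : E) • (i : E) = ∑ b ∈ B, f b • b := by
    rw [Finset.univ_eq_attach, Finset.sum_attach B fun b => f b • b]
  intro b hb
  exact h (by rw [hs]; exact hf) ⟨b, hb⟩

/-- The nonnegative cone on the base. -/
def NNCone (B : Finset E) : Set E :=
  {x | ∃ e : E → ℝ, (∀ b, 0 ≤ e b) ∧ x = ∑ b ∈ B, e b • b}

lemma NNCone.add {B : Finset E} {x y : E} (hx : x ∈ NNCone B) (hy : y ∈ NNCone B) :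
    x + y ∈ NNCone B := by
  obtain ⟨e, he, rfl⟩ := hx
  obtain ⟨e', he', rfl⟩ := hy
  exact ⟨fun b => e b + e' b, fun b => add_nonneg (he b) (he' b), by
    rw [← Finset.sum_add_distrib]; exact Finset.sum_congr rfl fun b _ => (add_smul _ _ _).symm⟩

lemma NNCone.smul {B : Finset E} {x : E} {c : ℝ} (hc : 0 ≤ c) (hx : x ∈ NNCone B) :
    c • x ∈ NNCone B := by
  obtain ⟨e, he, rfl⟩ := hx
  exact ⟨fun b => c * e b, fun b => mul_nonneg hc (he b), by
    rw [Finset.smul_sum]; exact Finset.sum_congr rfl fun b _ => (smul_smul _ _ _)⟩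

lemma NNCone.eq_zero {R Rpos B : Finset E} (hbase : IsBaseOf R Rpos B) {x : E}
    (hx : x ∈ NNCone B) (hx' : -x ∈ NNCone B) : x = 0 := by
  obtain ⟨e, he, hxe⟩ := hx
  obtain ⟨e', he', hxe'⟩ := hx'
  have hz : ∑ b ∈ B, (e b + e' b) • b = 0 := by
    simp only [add_smul, Finset.sum_add_distrib, ← hxe, ← hxe']
    abel
  have hco := base_coeffs_zero hbase _ hz
  have he0 : ∀ b ∈ B, e b = 0 := fun b hb => by
    have := hco b hb; have := he b; have := he' b; linarith
  rw [hxe]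
  exact Finset.sum_eq_zero fun b hb => by rw [he0 b hb, zero_smul]

lemma mem_cone_of_pos {R Rpos B : Finset E} (hbase : IsBaseOf R Rpos B) {x : E}
    (hx : x ∈ Rpos) : x ∈ NNCone B := by
  obtain ⟨c, h1, h2⟩ := hbase.pos_combo x hx
  exact ⟨c, h1, h2⟩

lemma pos_of_mem_cone {R Rpos B : Finset E} (hRS : IsRootSystem R) (hbase : IsBaseOf R Rpos B)
    {γ : E} (hγ : γ ∈ R) (hc : γ ∈ NNCone B) : γ ∈ Rpos := by
  rcases hbase.pos_or_neg γ hγ with h | h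
  · exact h
  · exact absurd (NNCone.eq_zero hbase hc (mem_cone_of_pos hbase h)) (hRS.nonzero γ hγ)

lemma smul_mem_pos {R Rpos B : Finset E} (hRS : IsRootSystem R) (hbase : IsBaseOf R Rpos B)
    {α : E} (hα : α ∈ Rpos) {c : ℝ} (hc : 0 < c) (hcα : c • α ∈ R) : c • α ∈ Rpos :=
  pos_of_mem_cone hRS hbase hcα (NNCone.smul hc.le (mem_cone_of_pos hbase hα))

/-- The reflection in a root is realized by an element of the Weyl group. -/
lemma exists_reflection {R : Finset E} (hRS : IsRootSystem R) {β : E} (hβ : β ∈ R) :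
    ∃ g : E ≃ₗᵢ[ℝ] E, g ∈ weylGroup R ∧ IsReflectionOf g β := by
  have : FiniteDimensional ℝ E := ⟨⟨R, hRS.span_top⟩⟩
  have hform : IsReflectionOf (Submodule.reflection (ℝ ∙ β)ᗮ) β := by
    intro x
    have hb : ⟪β, β⟫ = (‖β‖ ^ 2 : ℝ) := real_inner_self_eq_norm_sq β
    rw [Submodule.reflection_apply, Submodule.starProjection_orthogonal_val, Submodule.starProjection_singleton]
    rw [real_inner_comm x β, hb]
    simp only [RCLike.ofReal_real_eq_id, id_eq, two_smul]
    rw [show (2 * ⟪x, β⟫ / (‖β‖ ^ 2 : ℝ)) = ⟪x, β⟫ / ‖β‖ ^ 2 + ⟪x, β⟫ / ‖β‖ ^ 2 by ring,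
      add_smul]
    abel
  exact ⟨Submodule.reflection (ℝ ∙ β)ᗮ, Subgroup.subset_closure ⟨β, hβ, hform⟩, hform⟩

end AuxLemmas

lemma rhom_coroot_gt_one [NormedAddCommGroup E] [InnerProductSpace ℝ E]
    {R Rpos B : Finset E} (hRS : IsRootSystem R)
    (hbase : IsBaseOf R Rpos B) (τ : E → ℝ)
    (hτpos : ∀ α ∈ R, 0 < τ α)
    (hτinv : ∀ w ∈ weylGroup R, ∀ α ∈ R, τ (w α) = τ α)
    (hτgt : ∀ α ∈ Rtwo R, 1 < τ α * (if (2 : ℝ) • α ∈ R then τ ((2 : ℝ) • α) else 1) ^ 2)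
    {β : E} (hβ : β ∈ Rpos) : 1 < rhom Rpos τ (coroot β) := by
  have hβR : β ∈ R := hbase.pos_subset hβ
  have hβ0 : β ≠ 0 := hRS.nonzero β hβR
  have hββ : (0 : ℝ) < ⟪β, β⟫ := by
    rw [real_inner_self_eq_norm_sq]; exact pow_pos (norm_pos_iff.2 hβ0) 2
  obtain ⟨s, hsa⟩ : ∃ s : E → E, ∀ x, s x = x - (2 * ⟪x, β⟫ / ⟪β, β⟫) • β :=
    ⟨_, fun _ => rfl⟩
  obtain ⟨f, hfa⟩ : ∃ f : E → ℝ, ∀ α, f α = τ α ^ (⟪coroot β, α⟫ / 2) :=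
    ⟨_, fun _ => rfl⟩
  obtain ⟨g, hgW, hgform⟩ := exists_reflection hRS hβR
  have hτs : ∀ α ∈ R, τ (s α) = τ α := fun α hα => by
    rw [hsa, show α - (2 * ⟪α, β⟫ / ⟪β, β⟫) • β = g α from (hgform α).symm]
    exact hτinv g hgW α hα
  have hsR : ∀ α ∈ R, s α ∈ R := fun α hα => by
    rw [hsa]; exact hRS.reflect_mem β hβR α hα
  have hsip : ∀ x, ⟪s x, β⟫ = -⟪x, β⟫ := by
    intro x
    rw [hsa]
    simp only [inner_sub_left, real_inner_smul_left]
    field_simp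
    ring
  have hss : ∀ x, s (s x) = x := by
    intro x
    rw [hsa (s x), hsip x, hsa x]
    rw [show 2 * -⟪x, β⟫ / ⟪β, β⟫ = -(2 * ⟪x, β⟫ / ⟪β, β⟫) by ring, neg_smul, sub_neg_eq_add]
    abel
  have hsl : ∀ (c : ℝ) (x : E), s (c • x) = c • s x := by
    intro c x
    rw [hsa, hsa, real_inner_smul_left, smul_sub, smul_smul]
    rw [show 2 * (c * ⟪x, β⟫) / ⟪β, β⟫ = c * (2 * ⟪x, β⟫ / ⟪β, β⟫) by ring]
  have hν : ∀ α : E, ⟪coroot β, α⟫ = 2 * ⟪α, β⟫ / ⟪β, β⟫ := fun α => by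
    rw [coroot, real_inner_smul_left, real_inner_comm β α]; ring
  have hνs : ∀ α : E, ⟪coroot β, s α⟫ = -⟪coroot β, α⟫ := fun α => by
    rw [hν (s α), hsip α, hν α]; ring
  have hdouble : ∀ x : E, (2 : ℝ) • ((2 : ℝ)⁻¹ • x) = x := fun x => by
    rw [smul_smul]; norm_num
  have hspos : ∀ α ∈ Rpos, s α ∉ Rpos → 0 < ⟪α, β⟫ := by
    intro α hα hsα
    by_contra hle
    push_neg at hle
    apply hsα
    have ht : 0 ≤ -(2 * ⟪α, β⟫ / ⟪β, β⟫) := by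
      rw [neg_nonneg]
      exact div_nonpos_of_nonpos_of_nonneg (by linarith) hββ.le
    refine pos_of_mem_cone hRS hbase (hsR α (hbase.pos_subset hα)) ?_
    have hsα' : s α = α + (-(2 * ⟪α, β⟫ / ⟪β, β⟫)) • β := by
      rw [hsa, neg_smul, sub_eq_add_neg]
    rw [hsα']
    exact NNCone.add (mem_cone_of_pos hbase hα) (NNCone.smul ht (mem_cone_of_pos hbase hβ))
  have hfpos : ∀ α ∈ R, 0 < f α := fun α hα => by
    rw [hfa]; exact Real.rpow_pos_of_pos (hτpos α hα) _
  -- part 1: product over non-flipped roots is 1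
  have hpart1 : ∏ α ∈ Rpos.filter (fun α => s α ∈ Rpos), f α = 1 := by
    refine Finset.prod_involution (fun a _ => s a) ?_ ?_ ?_ ?_
    · intro a ha
      obtain ⟨ha1, _⟩ := Finset.mem_filter.1 ha
      have haR := hbase.pos_subset ha1
      rw [hfa, hfa, hτs a haR, hνs a, neg_div, Real.rpow_neg (hτpos a haR).le,
        mul_inv_cancel₀ (Real.rpow_pos_of_pos (hτpos a haR) _).ne']
    · intro a ha
      contrapose!
      intro hsa'
      have h0 : (2 * ⟪a, β⟫ / ⟪β, β⟫) • β = 0 := by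
        have h1 : a - (2 * ⟪a, β⟫ / ⟪β, β⟫) • β = a := by rw [← hsa]; exact hsa'
        rwa [sub_eq_self] at h1
      rcases smul_eq_zero.1 h0 with h | h
      · rw [hfa, hν a, h, zero_div, Real.rpow_zero]
      · exact absurd h hβ0
    · intro a ha
      obtain ⟨ha1, ha2⟩ := Finset.mem_filter.1 ha
      exact Finset.mem_filter.2 ⟨ha2, by rw [hss a]; exact ha1⟩
    · intro a ha
      exact hss a
  -- flipped roots: closure facts
  have hs2_double : ∀ α ∈ Rpos.filter (fun α => s α ∉ Rpos), (2 : ℝ) • α ∈ R →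
      (2 : ℝ) • α ∈ Rpos.filter (fun α => s α ∉ Rpos) := by
    intro α hα h2R
    obtain ⟨hα1, hα2⟩ := Finset.mem_filter.1 hα
    refine Finset.mem_filter.2 ⟨smul_mem_pos hRS hbase hα1 two_pos h2R, ?_⟩
    intro hcon
    rw [hsl] at hcon
    have hsαR : s α ∈ R := hsR α (hbase.pos_subset hα1)
    rcases hbase.pos_or_neg _ hsαR with h | h
    · exact hα2 h
    · have h1 : (2 : ℝ) • (-(s α)) ∈ R := by
        rw [smul_neg]; exact hRS.neg_mem _ (hbase.pos_subset hcon)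
      have h2 : (2 : ℝ) • (-(s α)) ∈ Rpos := smul_mem_pos hRS hbase h two_pos h1
      rw [smul_neg] at h2
      exact hbase.not_both _ hcon h2
  have hs2_half : ∀ γ ∈ Rpos.filter (fun α => s α ∉ Rpos), (2 : ℝ)⁻¹ • γ ∈ R →
      (2 : ℝ)⁻¹ • γ ∈ Rpos.filter (fun α => s α ∉ Rpos) := by
    intro γ hγ hhR
    obtain ⟨hγ1, hγ2⟩ := Finset.mem_filter.1 hγ
    refine Finset.mem_filter.2 ⟨smul_mem_pos hRS hbase hγ1 (by norm_num) hhR, ?_⟩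
    intro hcon
    apply hγ2
    have h1 : (2 : ℝ) • s ((2 : ℝ)⁻¹ • γ) ∈ R := by
      rw [hsl, hdouble]; exact hsR γ (hbase.pos_subset hγ1)
    have h2 := smul_mem_pos hRS hbase hcon two_pos h1
    rwa [hsl, hdouble] at h2
  have hnotq_half : ∀ γ ∈ R, (2 : ℝ)⁻¹ • γ ∈ R → (2 : ℝ)⁻¹ • ((2 : ℝ)⁻¹ • γ) ∉ R := by
    intro γ hγR hhalf hquarter
    obtain ⟨k, hk⟩ := hRS.cartan_int γ hγR _ hquarter
    have hγγ : (0 : ℝ) < ⟪γ, γ⟫ := by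
      rw [real_inner_self_eq_norm_sq]; exact pow_pos (norm_pos_iff.2 (hRS.nonzero γ hγR)) 2
    rw [smul_smul, real_inner_smul_left] at hk
    have hk2 : (k : ℝ) = 1 / 2 := by
      rw [hk]
      norm_num
      field_simp
      rw [mul_div_assoc, div_self (norm_ne_zero_iff.2 (hRS.nonzero γ hγR))]; norm_num
    have h1 : ((2 * k : ℤ) : ℝ) = 1 := by push_cast; linarith
    have h2 : (2 * k : ℤ) = 1 := by exact_mod_cast h1
    omega
  have hβs2 : β ∈ Rpos.filter (fun α => s α ∉ Rpos) := by
    refine Finset.mem_filter.2 ⟨hβ, ?_⟩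
    have hsβ : s β = -β := by
      rw [hsa, show 2 * ⟪β, β⟫ / ⟪β, β⟫ = 2 by field_simp, two_smul]
      abel
    rw [hsβ]
    exact hbase.not_both β hβ
  -- the image identity
  have hD : (Rpos.filter (fun α => s α ∉ Rpos)).filter (fun α => (2 : ℝ)⁻¹ • α ∈ R) =
      (((Rpos.filter (fun α => s α ∉ Rpos)).filter (fun α => (2 : ℝ)⁻¹ • α ∉ R)).filter
        (fun α => (2 : ℝ) • α ∈ R)).image (fun α => (2 : ℝ) • α) := by
    ext γ
    simp only [Finset.mem_image, Finset.mem_filter]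
    constructor
    · rintro ⟨⟨hγ1, hγ2⟩, hγq⟩
      have hγs2 : γ ∈ Rpos.filter (fun α => s α ∉ Rpos) := Finset.mem_filter.2 ⟨hγ1, hγ2⟩
      have hhalf := hs2_half γ hγs2 hγq
      obtain ⟨hh1, hh2⟩ := Finset.mem_filter.1 hhalf
      refine ⟨(2 : ℝ)⁻¹ • γ, ⟨⟨⟨hh1, hh2⟩, hnotq_half γ (hbase.pos_subset hγ1) hγq⟩, ?_⟩,
        hdouble γ⟩
      rw [hdouble]
      exact hbase.pos_subset hγ1
    · rintro ⟨α, ⟨⟨⟨hα1, hα2⟩, _⟩, h2R⟩, rfl⟩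
      have hαs2 : α ∈ Rpos.filter (fun α => s α ∉ Rpos) := Finset.mem_filter.2 ⟨hα1, hα2⟩
      have hd := hs2_double α hαs2 h2R
      obtain ⟨hd1, hd2⟩ := Finset.mem_filter.1 hd
      refine ⟨⟨hd1, hd2⟩, ?_⟩
      rw [smul_smul]
      norm_num
      exact hbase.pos_subset hα1
  -- each combined factor exceeds 1
  have hfac : ∀ α ∈ (Rpos.filter (fun α => s α ∉ Rpos)).filter (fun α => (2 : ℝ)⁻¹ • α ∉ R),
      1 < f α * (if (2 : ℝ) • α ∈ R then f ((2 : ℝ) • α) else 1) := by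
    intro α hαA
    obtain ⟨hαs2, hαnq⟩ := Finset.mem_filter.1 hαA
    obtain ⟨hαpos, hαns⟩ := Finset.mem_filter.1 hαs2
    have hαR := hbase.pos_subset hαpos
    have hk : 0 < ⟪coroot β, α⟫ := by
      rw [hν]
      exact div_pos (by linarith [hspos α hαpos hαns]) hββ
    have hRtwo : α ∈ Rtwo R := Finset.mem_filter.2 ⟨hαR, hαnq⟩
    have hb := hτgt α hRtwo
    by_cases h2 : (2 : ℝ) • α ∈ R
    · rw [if_pos h2] at hb ⊢
      have hτ2 : 0 < τ ((2 : ℝ) • α) := hτpos _ h2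
      have heq : f α * f ((2 : ℝ) • α) = (τ α * τ ((2 : ℝ) • α) ^ 2) ^ (⟪coroot β, α⟫ / 2) := by
        rw [hfa, hfa, real_inner_smul_right]
        rw [Real.mul_rpow (hτpos α hαR).le (by positivity)]
        congr 1
        rw [← Real.rpow_natCast (τ ((2 : ℝ) • α)) 2, ← Real.rpow_mul hτ2.le]
        congr 1
        push_cast
        ring
      rw [heq, Real.one_lt_rpow_iff_of_pos (by positivity)]
      exact Or.inl ⟨hb, by linarith⟩
    · rw [if_neg h2] at hb ⊢
      rw [one_pow, mul_one] at hb
      rw [mul_one, hfa, Real.one_lt_rpow_iff_of_pos (hτpos α hαR)]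
      exact Or.inl ⟨hb, by linarith⟩
  have hAne : ((Rpos.filter (fun α => s α ∉ Rpos)).filter
      (fun α => (2 : ℝ)⁻¹ • α ∉ R)).Nonempty := by
    by_cases hqβ : (2 : ℝ)⁻¹ • β ∈ R
    · exact ⟨(2 : ℝ)⁻¹ • β,
        Finset.mem_filter.2 ⟨hs2_half β hβs2 hqβ, hnotq_half β hβR hqβ⟩⟩
    · exact ⟨β, Finset.mem_filter.2 ⟨hβs2, hqβ⟩⟩
  -- part 2: the product over flipped roots exceeds 1
  have hpart2 : 1 < ∏ α ∈ Rpos.filter (fun α => s α ∉ Rpos), f α := by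
    rw [← Finset.prod_filter_mul_prod_filter_not
      (Rpos.filter (fun α => s α ∉ Rpos)) (fun α => (2 : ℝ)⁻¹ • α ∉ R) f]
    have hnn : (Rpos.filter (fun α => s α ∉ Rpos)).filter (fun α => ¬ ((2 : ℝ)⁻¹ • α ∉ R)) =
        (Rpos.filter (fun α => s α ∉ Rpos)).filter (fun α => (2 : ℝ)⁻¹ • α ∈ R) := by
      apply Finset.filter_congr
      intro x _
      simp only [not_not]
    rw [hnn, hD, Finset.prod_image
      (fun a _ b _ hab => smul_right_injective E (two_ne_zero) hab)]
    have hsecond : ∏ x ∈ ((Rpos.filter (fun α => s α ∉ Rpos)).filter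
          (fun α => (2 : ℝ)⁻¹ • α ∉ R)).filter (fun α => (2 : ℝ) • α ∈ R),
          f ((2 : ℝ) • x) =
        ∏ α ∈ (Rpos.filter (fun α => s α ∉ Rpos)).filter (fun α => (2 : ℝ)⁻¹ • α ∉ R),
          if (2 : ℝ) • α ∈ R then f ((2 : ℝ) • α) else 1 :=
      Finset.prod_filter _ _
    rw [hsecond, ← Finset.prod_mul_distrib]
    obtain ⟨hge, heq⟩ := prod_ge_one_aux _ _ (fun i hi => (hfac i hi).le)
    refine lt_of_le_of_ne hge fun hcon => ?_
    obtain ⟨i0, hi0⟩ := hAne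
    exact (hfac i0 hi0).ne' ((heq.1 hcon.symm) i0 hi0)
  have hr : rhom Rpos τ (coroot β) = ∏ α ∈ Rpos, f α :=
    Finset.prod_congr rfl fun α _ => (hfa α).symm
  rw [hr, ← Finset.prod_filter_mul_prod_filter_not Rpos (fun α => s α ∈ Rpos) f, hpart1, one_mul]
  exact hpart2

/-- If `λ - μ` lies in `Q⁺` (the `ℕ`-span of the positive coroots) then `r(μ) ≤ r(λ)`,
with equality iff `μ = λ`. -/
theorem stmt4 [NormedAddCommGroup E] [InnerProductSpace ℝ E]
    (R Rpos B : Finset E) (hRS : IsRootSystem R) (hirr : IsIrreducibleRS R)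
    (hbase : IsBaseOf R Rpos B) (τ : E → ℝ)
    (hτpos : ∀ α ∈ R, 0 < τ α)
    (hτinv : ∀ w ∈ weylGroup R, ∀ α ∈ R, τ (w α) = τ α)
    (hτgt : ∀ α ∈ Rtwo R, 1 < τ α * (if (2 : ℝ) • α ∈ R then τ ((2 : ℝ) • α) else 1) ^ 2)
    (lam mu : E) (hlam : inCoweightLattice B lam) (hmu : inCoweightLattice B mu)
    (hdiff : ∃ c : E → ℕ, lam - mu = ∑ α ∈ Rpos, (c α : ℝ) • coroot α) :
    rhom Rpos τ mu ≤ rhom Rpos τ lam ∧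
    (rhom Rpos τ mu = rhom Rpos τ lam ↔ mu = lam) := by
  obtain ⟨c, hc⟩ := hdiff
  have hτpos' : ∀ α ∈ Rpos, 0 < τ α := fun α hα => hτpos α (hbase.pos_subset hα)
  have hlam_eq : lam = mu + ∑ α ∈ Rpos, (c α : ℝ) • coroot α := by
    rw [← hc]; abel
  have hgt : ∀ α ∈ Rpos, 1 < rhom Rpos τ (coroot α) := fun α hα =>
    rhom_coroot_gt_one hRS hbase τ hτpos hτinv hτgt hα
  have hsplit : rhom Rpos τ lam = rhom Rpos τ mu * ∏ α ∈ Rpos, rhom Rpos τ (coroot α) ^ c α := by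
    rw [hlam_eq, rhom_add _ _ hτpos', rhom_sum _ _ hτpos']
  have hfac_ge : ∀ α ∈ Rpos, 1 ≤ rhom Rpos τ (coroot α) ^ c α := fun α hα =>
    one_le_pow₀ (hgt α hα).le
  obtain ⟨hPge, hPeq⟩ := prod_ge_one_aux Rpos (fun α => rhom Rpos τ (coroot α) ^ c α) hfac_ge
  have hmupos : 0 < rhom Rpos τ mu := rhom_pos _ _ hτpos' mu
  constructor
  · rw [hsplit]
    exact le_mul_of_one_le_right hmupos.le hPge
  constructor
  · intro heq
    have hP1 : ∏ α ∈ Rpos, rhom Rpos τ (coroot α) ^ c α = 1 := by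
      rw [hsplit] at heq
      field_simp at heq
      nlinarith [heq]
    have hc0 : ∀ α ∈ Rpos, c α = 0 := by
      intro α hα
      by_contra hne
      exact ((hPeq.1 hP1 α hα) ▸ (one_lt_pow₀ (hgt α hα) hne)).false
    have hsum0 : lam - mu = 0 := by
      rw [hc]
      exact Finset.sum_eq_zero fun α hα => by rw [hc0 α hα]; norm_num
    exact (sub_eq_zero.1 hsum0).symm
  · rintro rfl
    rfl
end

section
/- Let R be an irreducible root system with highest root α̃ and Weyl group W₀. If at most two root lengths occur and R is irreducible, then for any root β with |β| ≠ |α̃| there exists w ∈ W₀ with ⟨wα̃, β⟩ ≠ 0. Consequently ⟨wα̃^∨, β⟩ = ±1, and β^∨ = ±(s_β(wα̃^∨) − wα̃^∨) lies in the ℤ-span of W₀α̃^∨. -/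
open RealInnerProductSpace
open scoped Classical

variable {E : Type*}

section Aux
variable [NormedAddCommGroup E] [InnerProductSpace ℝ E]

/-- The linear map underlying the reflection in `α`. -/
noncomputable def reflLM (α : E) : E →ₗ[ℝ] E where
  toFun x := x - (2 * ⟪x, α⟫ / ⟪α, α⟫) • α
  map_add' x y := by
    simp only [inner_add_left]
    match_scalars <;> ring
  map_smul' c x := by
    simp only [real_inner_smul_left, RingHom.id_apply]
    match_scalars <;> ring

lemma reflLM_apply (α x : E) : reflLM α x = x - (2 * ⟪x, α⟫ / ⟪α, α⟫) • α := rfl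

lemma reflLM_invol (α : E) : Function.Involutive (reflLM α) := by
  intro x
  by_cases hα : α = 0
  · simp [reflLM_apply, hα]
  · have hq : ⟪α, α⟫ ≠ 0 := inner_self_ne_zero.mpr hα
    simp only [reflLM_apply, inner_sub_left, real_inner_smul_left]
    match_scalars
    · ring
    · field_simp
      ring

/-- The reflection in `α` as a linear isometry equivalence. -/
noncomputable def reflIso (α : E) : E ≃ₗᵢ[ℝ] E :=
  { LinearEquiv.ofInvolutive (reflLM α) (reflLM_invol α) with
    norm_map' := fun x => by
      have hx : (LinearEquiv.ofInvolutive (reflLM α) (reflLM_invol α)) x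
          = x - (2 * ⟪x, α⟫ / ⟪α, α⟫) • α := rfl
      by_cases hα : α = 0
      · rw [hx]; simp [hα]
      · have hq : ⟪α, α⟫ ≠ 0 := inner_self_ne_zero.mpr hα
        rw [hx]
        have h2 : ‖x - (2 * ⟪x, α⟫ / ⟪α, α⟫) • α‖ ^ 2 = ‖x‖ ^ 2 := by
          rw [norm_sub_sq_real, real_inner_smul_right, norm_smul]
          rw [Real.norm_eq_abs, mul_pow, sq_abs]
          have : ⟪α, α⟫ = ‖α‖ ^ 2 := real_inner_self_eq_norm_sq α
          rw [← this]
          field_simp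
          ring
        have := sq_eq_sq_iff_abs_eq_abs (‖x - (2 * ⟪x, α⟫ / ⟪α, α⟫) • α‖) ‖x‖
        rw [abs_of_nonneg (norm_nonneg _), abs_of_nonneg (norm_nonneg _)] at this
        exact this.mp h2 }

lemma reflIso_apply (α x : E) : reflIso α x = x - (2 * ⟪x, α⟫ / ⟪α, α⟫) • α := rfl

lemma reflIso_mem {R : Finset E} {α : E} (hα : α ∈ R) : reflIso α ∈ weylGroup R :=
  Subgroup.subset_closure ⟨α, hα, fun x => rfl⟩

end Aux
section Aux2
variable [NormedAddCommGroup E] [InnerProductSpace ℝ E]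

lemma weyl_maps {R : Finset E} (hRS : IsRootSystem R) {g : E ≃ₗᵢ[ℝ] E}
    (hg : g ∈ weylGroup R) : ∀ α ∈ R, g α ∈ R := by
  induction hg using Subgroup.closure_induction with
  | mem x hx =>
    rcases hx with ⟨γ, hγ, hrefl⟩
    intro α hα
    rw [hrefl α]
    exact hRS.reflect_mem γ hγ α hα
  | one => intro α hα; simpa using hα
  | mul x y hx hy px py =>
    intro α hα
    have : (x * y) α = x (y α) := rfl
    rw [this]
    exact px (y α) (py α hα)
  | inv x hx px =>
    have himg : Finset.image (fun a => x a) R = R := by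
      apply Finset.eq_of_subset_of_card_le
      · intro a ha
        rcases Finset.mem_image.mp ha with ⟨b, hb, rfl⟩
        exact px b hb
      · rw [Finset.card_image_of_injective _ x.injective]
    intro α hα
    rw [← himg] at hα
    rcases Finset.mem_image.mp hα with ⟨b, hb, rfl⟩
    have : x⁻¹ (x b) = b := x.symm_apply_apply b
    rw [this]
    exact hb

lemma exists_w {R : Finset E} (hRS : IsRootSystem R) (hirr : IsIrreducibleRS R)
    {αt β : E} (hαt : αt ∈ R) (hβ : β ∈ R) :
    ∃ w ∈ weylGroup R, ⟪w αt, β⟫ ≠ 0 := by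
  by_contra hcon
  push_neg at hcon
  set S₂ : Set E := {α | α ∈ R ∧ ∃ w ∈ weylGroup R, ⟪α, w αt⟫ ≠ 0} with hS₂
  set S₁ : Set E := {α | α ∈ R ∧ ∀ w ∈ weylGroup R, ⟪α, w αt⟫ = 0} with hS₁
  have hunion : (R : Set E) = S₁ ∪ S₂ := by
    ext α
    constructor
    · intro hα
      by_cases h : ∀ w ∈ weylGroup R, ⟪α, w αt⟫ = 0
      · exact Or.inl ⟨hα, h⟩
      · push_neg at h
        exact Or.inr ⟨hα, h⟩
    · rintro (⟨h, _⟩ | ⟨h, _⟩) <;> exact h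
  have horth : ∀ a ∈ S₁, ∀ b ∈ S₂, ⟪a, b⟫ = 0 := by
    rintro a ⟨haR, ha⟩ b ⟨hbR, w, hw, hb⟩
    have hb0 : b ≠ 0 := hRS.nonzero b hbR
    have hq : ⟪b, b⟫ ≠ 0 := inner_self_ne_zero.mpr hb0
    have hsb : reflIso b ∈ weylGroup R := reflIso_mem hbR
    have h1 : ⟪a, (reflIso b * w) αt⟫ = 0 := ha _ (mul_mem hsb hw)
    have h2 : (reflIso b * w) αt = w αt - (2 * ⟪w αt, b⟫ / ⟪b, b⟫) • b := reflIso_apply b (w αt)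
    rw [h2, inner_sub_right, real_inner_smul_right, ha w hw, zero_sub, neg_eq_zero,
      mul_eq_zero] at h1
    rcases h1 with h1 | h1
    · exfalso
      apply hb
      rw [real_inner_comm] at h1
      rcases mul_eq_zero.mp ((div_eq_zero_iff.mp h1).resolve_right hq) with h | h
      · norm_num at h
      · exact h
    · exact h1
  rcases hirr S₁ S₂ hunion horth with h | h
  · have : β ∈ S₁ := ⟨hβ, fun w hw => by rw [real_inner_comm]; exact hcon w hw⟩
    rw [h] at this; exact this
  · have hmem : αt ∈ S₂ := by
      refine ⟨hαt, 1, one_mem _, ?_⟩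
      have h1 : (1 : E ≃ₗᵢ[ℝ] E) αt = αt := rfl
      rw [h1]
      exact inner_self_ne_zero.mpr (hRS.nonzero αt hαt)
    rw [h] at hmem; exact hmem

end Aux2
section Aux3
variable [NormedAddCommGroup E] [InnerProductSpace ℝ E]

lemma coeff_unique {B : Finset E}
    (hind : LinearIndependent ℝ (fun b : B => (b : E))) (c d : E → ℝ)
    (h : ∑ b ∈ B, c b • b = ∑ b ∈ B, d b • b) : ∀ b ∈ B, c b = d b := by
  have h0 : ∑ i : B, (c i - d i) • (i : E) = 0 := by
    have h1 : ∑ i : B, (c i - d i) • (i : E)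
        = (∑ b ∈ B, c b • b) - (∑ b ∈ B, d b • b) := by
      rw [← Finset.sum_coe_sort B (fun b => c b • b),
        ← Finset.sum_coe_sort B (fun b => d b • b), ← Finset.sum_sub_distrib]
      exact Finset.sum_congr rfl (fun i _ => sub_smul _ _ _)
    rw [h1, h, sub_self]
  intro b hb
  have := linearIndependent_iff'.mp hind Finset.univ (fun i => c i - d i) h0 ⟨b, hb⟩
    (Finset.mem_univ _)
  have : c b - d b = 0 := this
  linarith

lemma spanB {R Rpos B : Finset E} (hRS : IsRootSystem R) (hbase : IsBaseOf R Rpos B) :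
    Submodule.span ℝ (B : Set E) = ⊤ := by
  rw [eq_top_iff, ← hRS.span_top, Submodule.span_le]
  intro α hα
  have hα' : α ∈ R := hα
  have key : ∀ γ ∈ Rpos, γ ∈ Submodule.span ℝ (B : Set E) := by
    intro γ hγ
    rcases hbase.pos_combo γ hγ with ⟨c, _, hrep⟩
    rw [hrep]
    exact Submodule.sum_mem _ (fun b hb => Submodule.smul_mem _ _ (Submodule.subset_span hb))
  rcases hbase.pos_or_neg α hα' with h | h
  · exact key α h
  · have := Submodule.neg_mem _ (key _ h)
    simpa using this

lemma exists_delta {R Rpos B : Finset E} (hRS : IsRootSystem R) (hbase : IsBaseOf R Rpos B) :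
    ∃ δ : E, ∀ b ∈ B, ⟪δ, b⟫ = 1 := by
  have hsp : ⊤ ≤ Submodule.span ℝ (Set.range fun b : B => (b : E)) := by
    rw [Subtype.range_coe_subtype]
    exact le_of_eq (spanB hRS hbase).symm
  let bB : Module.Basis B ℝ E := Module.Basis.mk hbase.indep hsp
  haveI : FiniteDimensional ℝ E := bB.finiteDimensional_of_finite
  refine ⟨(InnerProductSpace.toDual ℝ E).symm
    (LinearMap.toContinuousLinearMap bB.sumCoords), ?_⟩
  intro b hb
  rw [InnerProductSpace.toDual_symm_apply]
  have h1 : (LinearMap.toContinuousLinearMap bB.sumCoords) b = bB.sumCoords b := rfl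
  have h2 : bB ⟨b, hb⟩ = b := by rw [Module.Basis.mk_apply]
  rw [h1, ← h2, Module.Basis.sumCoords_self_apply]

lemma highest_dominant {R Rpos B : Finset E} (hRS : IsRootSystem R) (hbase : IsBaseOf R Rpos B)
    {αt : E} (hαt : αt ∈ R)
    (hhigh : ∀ β ∈ R, ∃ c : E → ℝ, (∀ b, 0 ≤ c b) ∧ αt - β = ∑ b ∈ B, c b • b) :
    ∀ b ∈ B, 0 ≤ ⟪αt, b⟫ := by
  intro b hb
  by_contra hneg
  push_neg at hneg
  have hbR : b ∈ R := hbase.pos_subset (hbase.base_subset hb)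
  have hbb : (0:ℝ) < ⟪b, b⟫ := lt_of_le_of_ne real_inner_self_nonneg (Ne.symm (inner_self_ne_zero.mpr (hRS.nonzero b hbR)))
  set n : ℝ := 2 * ⟪αt, b⟫ / ⟪b, b⟫ with hn
  have hn0 : n < 0 := div_neg_of_neg_of_pos (by linarith) hbb
  have hmem : αt - n • b ∈ R := by
    have := hRS.reflect_mem b hbR αt hαt
    rwa [← hn] at this
  rcases hhigh _ hmem with ⟨c, hc, hrep⟩
  have hrep' : ∑ b' ∈ B, c b' • b' = ∑ b' ∈ B, (if b' = b then n else 0) • b' := by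
    rw [← hrep]
    have h2 : ∑ b' ∈ B, (if b' = b then n else 0) • b' = n • b := by
      simp only [ite_smul, zero_smul]
      rw [Finset.sum_ite_eq' B b (fun b' => n • b'), if_pos hb]
    rw [h2, sub_sub_cancel]
  have hcb := coeff_unique hbase.indep _ _ hrep' b hb
  rw [if_pos rfl] at hcb
  have := hc b
  linarith

lemma norm_le_highest {R Rpos B : Finset E} (hRS : IsRootSystem R) (hbase : IsBaseOf R Rpos B)
    {αt : E} (hαt : αt ∈ R)
    (hhigh : ∀ β ∈ R, ∃ c : E → ℝ, (∀ b, 0 ≤ c b) ∧ αt - β = ∑ b ∈ B, c b • b)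
    {β : E} (hβ : β ∈ R) : ‖β‖ ≤ ‖αt‖ := by
  obtain ⟨δ, hδ⟩ := exists_delta hRS hbase
  set O : Finset E := R.filter (fun x => ∃ w ∈ weylGroup R, x = w β) with hO
  have hβO : β ∈ O := Finset.mem_filter.mpr ⟨hβ, 1, one_mem _, rfl⟩
  obtain ⟨γ, hγO, hmax⟩ := O.exists_max_image (fun x => ⟪x, δ⟫) ⟨β, hβO⟩
  obtain ⟨hγR, w, hw, hγw⟩ := Finset.mem_filter.mp hγO
  have hnorm : ‖γ‖ = ‖β‖ := by rw [hγw, LinearIsometryEquiv.norm_map]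
  have hdom : ∀ b ∈ B, 0 ≤ ⟪γ, b⟫ := by
    intro b hb
    by_contra hneg
    push_neg at hneg
    have hbR : b ∈ R := hbase.pos_subset (hbase.base_subset hb)
    have hbb : (0:ℝ) < ⟪b, b⟫ := lt_of_le_of_ne real_inner_self_nonneg (Ne.symm (inner_self_ne_zero.mpr (hRS.nonzero b hbR)))
    set n : ℝ := 2 * ⟪γ, b⟫ / ⟪b, b⟫ with hn
    have hn0 : n < 0 := div_neg_of_neg_of_pos (by linarith) hbb
    have hγ'R : γ - n • b ∈ R := by
      have := hRS.reflect_mem b hbR γ hγR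
      rwa [← hn] at this
    have hγ'O : γ - n • b ∈ O := by
      refine Finset.mem_filter.mpr ⟨hγ'R, reflIso b * w, mul_mem (reflIso_mem hbR) hw, ?_⟩
      have : (reflIso b * w) β = reflIso b (w β) := rfl
      rw [this, ← hγw, reflIso_apply, hn]
    have hle := hmax _ hγ'O
    have hδb : ⟪b, δ⟫ = 1 := by rw [real_inner_comm]; exact hδ b hb
    rw [inner_sub_left, real_inner_smul_left, hδb] at hle
    linarith
  rcases hhigh γ hγR with ⟨c, hc, hrep⟩
  have hαdom := highest_dominant hRS hbase hαt hhigh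
  have key : ∀ x : E, (∀ b ∈ B, 0 ≤ ⟪x, b⟫) → 0 ≤ ⟪αt - γ, x⟫ := by
    intro x hx
    rw [hrep, sum_inner]
    refine Finset.sum_nonneg (fun b hb => ?_)
    rw [real_inner_smul_left]
    refine mul_nonneg (hc b) ?_
    rw [real_inner_comm]
    exact hx b hb
  have h1 : 0 ≤ ⟪αt - γ, αt⟫ := key αt hαdom
  have h2 : 0 ≤ ⟪αt - γ, γ⟫ := key γ hdom
  rw [inner_sub_left] at h1 h2
  have hcomm : ⟪αt, γ⟫ = ⟪γ, αt⟫ := real_inner_comm γ αt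
  have hγγ : ⟪γ, γ⟫ = ‖γ‖ ^ 2 := real_inner_self_eq_norm_sq γ
  have hαα : ⟪αt, αt⟫ = ‖αt‖ ^ 2 := real_inner_self_eq_norm_sq αt
  have hsq : ‖γ‖ ^ 2 ≤ ‖αt‖ ^ 2 := by
    rw [← hγγ, ← hαα]; linarith
  rw [← hnorm]
  nlinarith [norm_nonneg γ, norm_nonneg αt]

end Aux3

/-- If at most two root lengths occur in the irreducible root system `R` with highest
root `α̃`, then for a root `β` with `‖β‖ ≠ ‖α̃‖` there is `w ∈ W₀` with `⟨wα̃, β⟩ ≠ 0`;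
for such `w`, `⟨wα̃^∨, β⟩ = ±1`, and `β^∨` lies in the `ℤ`-span of `W₀ α̃^∨`. -/
theorem stmt15 [NormedAddCommGroup E] [InnerProductSpace ℝ E]
    (R Rpos B : Finset E) (hRS : IsRootSystem R) (hirr : IsIrreducibleRS R)
    (hbase : IsBaseOf R Rpos B) (αt : E) (hαt : αt ∈ R)
    (hhigh : ∀ β ∈ R, ∃ c : E → ℝ, (∀ b, 0 ≤ c b) ∧ αt - β = ∑ b ∈ B, c b • b)
    (htwo : ∃ l₁ l₂ : ℝ, ∀ α ∈ R, ‖α‖ = l₁ ∨ ‖α‖ = l₂)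
    (β : E) (hβ : β ∈ R) (hlen : ‖β‖ ≠ ‖αt‖) :
    ∃ w ∈ weylGroup R, ⟪w αt, β⟫ ≠ 0 ∧
      (⟪w (coroot αt), β⟫ = 1 ∨ ⟪w (coroot αt), β⟫ = -1) ∧
      coroot β ∈ Submodule.span ℤ
        ((fun g : E ≃ₗᵢ[ℝ] E => g (coroot αt)) '' (weylGroup R : Set (E ≃ₗᵢ[ℝ] E))) := by
  obtain ⟨w, hw, hwβ⟩ := exists_w hRS hirr hαt hβ
  refine ⟨w, hw, hwβ, ?_⟩
  set γ₀ : E := w αt with hγ₀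
  have hγ₀R : γ₀ ∈ R := weyl_maps hRS hw αt hαt
  set a : ℝ := ⟪β, γ₀⟫ with haa
  have ha : a ≠ 0 := by
    rw [haa, real_inner_comm]; exact hwβ
  set q1 : ℝ := ⟪γ₀, γ₀⟫ with hq1def
  set q2 : ℝ := ⟪β, β⟫ with hq2def
  have hq1αt : q1 = ⟪αt, αt⟫ := w.inner_map_map αt αt
  have hq1pos : 0 < q1 :=
    lt_of_le_of_ne real_inner_self_nonneg (Ne.symm (inner_self_ne_zero.mpr (hRS.nonzero _ hγ₀R)))
  have hq2pos : 0 < q2 :=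
    lt_of_le_of_ne real_inner_self_nonneg (Ne.symm (inner_self_ne_zero.mpr (hRS.nonzero _ hβ)))
  obtain ⟨k, hk⟩ := hRS.cartan_int γ₀ hγ₀R β hβ
  obtain ⟨m, hm⟩ := hRS.cartan_int β hβ γ₀ hγ₀R
  rw [← hq1def, ← haa] at hk
  rw [real_inner_comm β γ₀, ← haa, ← hq2def] at hm
  have hk' : (k : ℝ) * q1 = 2 * a := by
    rw [eq_div_iff (ne_of_gt hq1pos)] at hk; exact hk
  have hm' : (m : ℝ) * q2 = 2 * a := by
    rw [eq_div_iff (ne_of_gt hq2pos)] at hm; exact hm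
  have hcs : a * a ≤ q2 * q1 := real_inner_mul_inner_self_le β γ₀
  have hprod : (k : ℝ) * m * (q1 * q2) = 4 * (a * a) := by
    linear_combination (m * q2) * hk' + (2 * a) * hm'
  have hQ : 0 < q1 * q2 := mul_pos hq1pos hq2pos
  have hkm4 : (k : ℝ) * m ≤ 4 := by nlinarith
  have ha2 : 0 < a * a := mul_self_pos.mpr ha
  have hkm0 : 0 < (k : ℝ) * m := by nlinarith
  -- length comparison
  have hble : ‖β‖ < ‖αt‖ := lt_of_le_of_ne (norm_le_highest hRS hbase hαt hhigh hβ) hlen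
  have hq2q1 : q2 < q1 := by
    rw [hq2def, hq1αt, real_inner_self_eq_norm_sq, real_inner_self_eq_norm_sq] at *
    nlinarith [norm_nonneg β, norm_nonneg αt]
  have hkabs : |(k : ℝ)| * q1 = |(m : ℝ)| * q2 := by
    have h1 := congrArg abs hk'
    have h2 := congrArg abs hm'
    rw [abs_mul, abs_of_pos hq1pos] at h1
    rw [abs_mul, abs_of_pos hq2pos] at h2
    rw [h1, h2]
  have hm0 : (m : ℝ) ≠ 0 := by
    intro h; rw [h, zero_mul] at hm'; exact ha (by linarith)
  have habsm : 0 < |(m : ℝ)| := abs_pos.mpr hm0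
  have habslt : |(k : ℝ)| < |(m : ℝ)| := by nlinarith
  -- move to ℤ
  have hkmZ : k * m ≤ 4 := by exact_mod_cast (by push_cast; exact hkm4 : ((k * m : ℤ) : ℝ) ≤ 4)
  have hkm0Z : 0 < k * m := by exact_mod_cast (by push_cast; exact hkm0 : (0 : ℝ) < ((k * m : ℤ) : ℝ))
  have habsltZ : |k| < |m| := by
    have : ((|k| : ℤ) : ℝ) < ((|m| : ℤ) : ℝ) := by push_cast; exact habslt
    exact_mod_cast this
  have hkabs1 : |k| = 1 := by
    have hK1 : 1 ≤ |k| := by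
      rcases eq_or_ne k 0 with h | h
      · rw [h] at hkm0Z; simp at hkm0Z
      · have := abs_pos.mpr h; omega
    have hM : |k| + 1 ≤ |m| := habsltZ
    have hprodZ : |k| * |m| ≤ 4 := by
      rw [← abs_mul, abs_of_pos hkm0Z]; exact hkmZ
    nlinarith
  have hk1 : k = 1 ∨ k = -1 := (abs_eq (by norm_num)).mp hkabs1
  -- pairing with coroot
  have hwc : w (coroot αt) = (2 / q1) • γ₀ := by
    rw [coroot, LinearIsometryEquiv.map_smul, hq1αt]
  have hpair : ⟪w (coroot αt), β⟫ = (k : ℝ) := by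
    rw [hwc, real_inner_smul_left, hk]
    rw [real_inner_comm β γ₀, ← haa]
    field_simp
  constructor
  · rcases hk1 with h | h <;> rw [hpair, h] <;> norm_num
  -- span membership
  · set x : E := w (coroot αt) with hx
    set y : E := (reflIso β * w) (coroot αt) with hy
    have hyx : y = x - (2 * ⟪x, β⟫ / q2) • β := by
      have : (reflIso β * w) (coroot αt) = reflIso β x := rfl
      rw [hy, this, reflIso_apply, hq2def]
    have hxy : x - y = (k : ℝ) • coroot β := by
      rw [hyx, coroot, ← hq2def, hpair, sub_sub_cancel, smul_smul]
      congr 1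
      field_simp
    have hxmem : x ∈ Submodule.span ℤ
        ((fun g : E ≃ₗᵢ[ℝ] E => g (coroot αt)) '' (weylGroup R : Set (E ≃ₗᵢ[ℝ] E))) :=
      Submodule.subset_span ⟨w, hw, rfl⟩
    have hymem : y ∈ Submodule.span ℤ
        ((fun g : E ≃ₗᵢ[ℝ] E => g (coroot αt)) '' (weylGroup R : Set (E ≃ₗᵢ[ℝ] E))) :=
      Submodule.subset_span ⟨reflIso β * w, mul_mem (reflIso_mem hβ) hw, rfl⟩
    rcases hk1 with h | h
    · have : coroot β = x - y := by rw [hxy, h]; simp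
      rw [this]; exact sub_mem hxmem hymem
    · have : coroot β = y - x := by
        rw [h] at hxy
        push_cast at hxy
        rw [neg_smul, one_smul] at hxy
        rw [← neg_neg (coroot β), ← hxy]
        abel
      rw [this]; exact sub_mem hymem hxmem
end
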